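/- The triangle Δ = {(x,y) | 0 ≤ x, 0 ≤ y, x + y ≤ 1} is forward-invariant under the flow of the system x' = x(3x + 4y − 3), y' = y(3x + 4y − 4): any solution starting in Δ remains in Δ for all later times. -/

import Mathlib

/-- If `u' = a·u` with `a` continuous and `u 0 ≥ 0`, then `u` stays nonnegative. -/
lemma linear_ode_nonneg (u a : ℝ → ℝ) (ha : Continuous a)
    (hu : ∀ t, HasDerivAt u (a t * u t) t) (h0 : 0 ≤ u 0) :
    ∀ t, 0 ≤ u t := by
  set A : ℝ → ℝ := fun t => ∫ s in (0:ℝ)..t, a s with hAdef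
  have hAderiv : ∀ t, HasDerivAt A (a t) t := by
    intro t
    exact intervalIntegral.integral_hasDerivAt_right (ha.intervalIntegrable 0 t)
      (ha.stronglyMeasurableAtFilter _ _) ha.continuousAt
  have hv : ∀ t, HasDerivAt (fun t => u t * Real.exp (-A t)) 0 t := by
    intro t
    have h1 := (hu t).fun_mul ((hAderiv t).neg.exp)
    refine h1.congr_deriv ?_
    ring
  have hconst : ∀ t, u t * Real.exp (-A t) = u 0 * Real.exp (-A 0) := by
    intro t
    exact is_const_of_deriv_eq_zero (fun s => (hv s).differentiableAt)
      (fun s => (hv s).deriv) t 0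
  intro t
  have h := hconst t
  have hA0 : A 0 = 0 := intervalIntegral.integral_same
  rw [hA0] at h
  simp at h
  nlinarith [Real.exp_pos (-A t), h0, h]

/-- The triangle Δ is forward invariant under the matter-radiation flow. -/
theorem triangle_forward_invariant
    (x y : ℝ → ℝ)
    (hx : ∀ t, HasDerivAt x (x t * (3 * x t + 4 * y t - 3)) t)
    (hy : ∀ t, HasDerivAt y (y t * (3 * x t + 4 * y t - 4)) t)
    (h0 : 0 ≤ x 0 ∧ 0 ≤ y 0 ∧ x 0 + y 0 ≤ 1) :
    ∀ t, 0 ≤ t → 0 ≤ x t ∧ 0 ≤ y t ∧ x t + y t ≤ 1 := by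
  have hxc : Continuous x := by
    rw [continuous_iff_continuousAt]
    exact fun t => (hx t).differentiableAt.continuousAt
  have hyc : Continuous y := by
    rw [continuous_iff_continuousAt]
    exact fun t => (hy t).differentiableAt.continuousAt
  have hxpos : ∀ t, 0 ≤ x t := by
    apply linear_ode_nonneg x (fun t => 3 * x t + 4 * y t - 3)
    · continuity
    · intro t
      have := hx t
      convert this using 1
      ring
    · exact h0.1
  have hypos : ∀ t, 0 ≤ y t := by
    apply linear_ode_nonneg y (fun t => 3 * x t + 4 * y t - 4)
    · continuity
    · intro t
      convert hy t using 1
      ring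
    · exact h0.2.1
  have hsum : ∀ t, 0 ≤ 1 - (x t + y t) := by
    apply linear_ode_nonneg (fun t => 1 - (x t + y t)) (fun t => 3 * x t + 4 * y t)
    · continuity
    · intro t
      have h1 := ((hasDerivAt_const t (1:ℝ)).fun_sub ((hx t).fun_add (hy t)))
      refine h1.congr_deriv ?_
      ring
    · simpa using h0.2.2
  intro t _
  exact ⟨hxpos t, hypos t, by linarith [hsum t]⟩
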